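/- Let G be a compact topological group acting continuously by ring automorphisms on a commutative ring A endowed with the discrete topology, and let 𝔭 be a prime ideal of the fixed subring A^G. Then G acts transitively on the set of prime ideals of A lying over 𝔭: for any two primes 𝔮, 𝔮' of A with 𝔮 ∩ A^G = 𝔮' ∩ A^G = 𝔭 there exists g ∈ G with g • 𝔮' = 𝔮. -/

import Mathlib

open Pointwise

section aux
variable {G A : Type*} [Group G] [TopologicalSpace G] [IsTopologicalGroup G]
    [CompactSpace G] [CommRing A] [TopologicalSpace A] [DiscreteTopology A]
    [MulSemiringAction G A] [ContinuousSMul G A]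

lemma orbit_finite' (a : A) : (MulAction.orbit G a).Finite := by
  have : Continuous fun g : G => g • a := continuous_id.smul continuous_const
  exact (isCompact_range this).finite_of_discrete

/-- Norm argument: every element of 𝔮' can be moved into 𝔮. -/
lemma exists_smul_mem (𝔮 𝔮' : Ideal A) [𝔮.IsPrime] [𝔮'.IsPrime]
    (h : ∀ a : A, (∀ g : G, g • a = a) → (a ∈ 𝔮 ↔ a ∈ 𝔮'))
    {y : A} (hy : y ∈ 𝔮') : ∃ g : G, g • y ∈ 𝔮 := by
  classical
  set t : Finset A := (orbit_finite' (G := G) y).toFinset with ht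
  have hyt : y ∈ t := by simp [ht, MulAction.mem_orbit_self]
  set N : A := ∏ z ∈ t, z with hN
  have hinv : ∀ g : G, g • N = N := by
    intro g
    have h1 : g • N = ∏ z ∈ t, g • z :=
      map_prod (MulSemiringAction.toRingHom G A g) (fun z => z) t
    rw [h1]
    refine Finset.prod_nbij (fun z => g • z) ?_ ?_ ?_ (fun _ _ => rfl)
    · intro z hz
      simp only [ht, Set.Finite.mem_toFinset] at hz ⊢
      obtain ⟨g₀, rfl⟩ := hz
      exact ⟨g * g₀, mul_smul g g₀ y⟩
    · intro z₁ _ z₂ _ hz; exact smul_left_cancel g hz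
    · intro z hz
      simp only [ht, Finset.mem_coe, Set.Finite.mem_toFinset, Set.mem_image] at hz ⊢
      obtain ⟨g₀, rfl⟩ := hz
      exact ⟨g⁻¹ • g₀ • y, ⟨g⁻¹ * g₀, mul_smul g⁻¹ g₀ y⟩, smul_inv_smul g _⟩
  have hN𝔮' : N ∈ 𝔮' := by
    obtain ⟨c, hc⟩ := Finset.dvd_prod_of_mem (fun z => z) hyt
    rw [hN, hc]; exact Ideal.mul_mem_right _ _ hy
  have hN𝔮 : N ∈ 𝔮 := (h N hinv).mpr hN𝔮'
  obtain ⟨z, hzt, hz𝔮⟩ := (Ideal.IsPrime.prod_mem_iff_exists_mem ‹𝔮.IsPrime› t).mp hN𝔮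
  simp only [ht, Set.Finite.mem_toFinset] at hzt
  obtain ⟨g, rfl⟩ := hzt
  exact ⟨g, hz𝔮⟩

/-- Finite intersection step: finitely many elements of 𝔮' can be moved into 𝔮
simultaneously. -/
lemma exists_smul_mem_finset (𝔮 𝔮' : Ideal A) [𝔮.IsPrime] [𝔮'.IsPrime]
    (h : ∀ a : A, (∀ g : G, g • a = a) → (a ∈ 𝔮 ↔ a ∈ 𝔮'))
    (s : Finset A) (hs : ∀ x ∈ s, x ∈ 𝔮') : ∃ g : G, ∀ x ∈ s, g • x ∈ 𝔮 := by
  classical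
  -- S: union of orbits of elements of s, a finite G-stable set
  set S : Set A := ⋃ x ∈ s, MulAction.orbit G x with hS
  have hSfin : S.Finite := Set.Finite.biUnion s.finite_toSet fun x _ => orbit_finite' x
  -- φ sends g to its action on S
  set φ : G → (S → A) := fun g a => g • (a : A) with hφ
  have hφcont : Continuous φ := by
    refine continuous_pi fun a => ?_
    exact continuous_id.smul continuous_const
  have : DiscreteTopology (S → A) := by
    have : Finite S := hSfin
    infer_instance
  have hrfin : (Set.range φ).Finite := (isCompact_range hφcont).finite_of_discrete
  -- finite set of coset representatives
  obtain ⟨T, hT⟩ : ∃ T : Finset G, ∀ g : G, ∃ g' ∈ T, φ g' = φ g := by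
    refine ⟨hrfin.toFinset.attach.image
      (fun v => ((Set.Finite.mem_toFinset hrfin).mp v.2).choose), fun g => ?_⟩
    have hg : φ g ∈ hrfin.toFinset := (Set.Finite.mem_toFinset hrfin).mpr ⟨g, rfl⟩
    exact ⟨_, Finset.mem_image_of_mem _ (Finset.mem_attach _ (⟨φ g, hg⟩ : {x // x ∈ hrfin.toFinset})),
      ((Set.Finite.mem_toFinset hrfin).mp hg).choose_spec⟩
  -- B: subring generated by S; elements of B only depend on φ g
  set B : Subring A := Subring.closure S with hB
  have hBdep : ∀ (g g' : G), φ g = φ g' → ∀ y ∈ B, g • y = g' • y := by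
    intro g g' hgg' y hy
    induction hy using Subring.closure_induction with
    | mem z hz => exact congrFun hgg' ⟨z, hz⟩
    | zero => simp
    | one => simp
    | add a b _ _ ha hb => simp [smul_add, ha, hb]
    | neg a _ ha => simp [smul_neg, ha]
    | mul a b _ _ ha hb => simp [smul_mul', ha, hb]
  -- primes of B
  set J : Ideal B := 𝔮'.comap B.subtype with hJ
  set f : G → Ideal B := fun g => (g⁻¹ • 𝔮).comap B.subtype with hf
  have hfprime : ∀ g : G, (f g).IsPrime := fun g => Ideal.IsPrime.comap _
  have hsub : (J : Set B) ⊆ ⋃ g ∈ T, (f g : Set B) := by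
    intro y hy
    have hy' : (y : A) ∈ 𝔮' := hy
    obtain ⟨g, hg⟩ := exists_smul_mem 𝔮 𝔮' h hy'
    obtain ⟨g', hg'T, hg'g⟩ := hT g
    have : g' • (y : A) ∈ 𝔮 := by
      rw [hBdep g' g hg'g y y.2]; exact hg
    have : (y : A) ∈ g'⁻¹ • 𝔮 := by
      rw [Ideal.mem_pointwise_smul_iff_inv_smul_mem, inv_inv]; exact this
    exact Set.mem_biUnion hg'T this
  have hsub' : (J : Set B) ⊆ ⋃ g ∈ (↑T : Set G), (f g : Set B) := by
    simpa using hsub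
  obtain ⟨g, _, hgle⟩ := (Ideal.subset_union_prime 1 1 (fun i _ _ _ => hfprime i)).mp hsub'
  refine ⟨g, fun x hx => ?_⟩
  have hxB : x ∈ B := Subring.subset_closure (Set.mem_biUnion hx (MulAction.mem_orbit_self x))
  have hxJ : (⟨x, hxB⟩ : B) ∈ J := hs x hx
  have hx𝔮 : x ∈ g⁻¹ • 𝔮 := Ideal.mem_comap.mp (hgle hxJ)
  rwa [Ideal.mem_pointwise_smul_iff_inv_smul_mem, inv_inv] at hx𝔮

/-- Compactness step: a single group element moves all of 𝔮' into 𝔮. -/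
lemma exists_smul_le (𝔮 𝔮' : Ideal A) [𝔮.IsPrime] [𝔮'.IsPrime]
    (h : ∀ a : A, (∀ g : G, g • a = a) → (a ∈ 𝔮 ↔ a ∈ 𝔮')) :
    ∃ g : G, ∀ x ∈ 𝔮', g • x ∈ 𝔮 := by
  classical
  by_contra hc
  push_neg at hc
  set Z : {x : A // x ∈ 𝔮'} → Set G := fun x => {g : G | g • x.1 ∈ 𝔮} with hZ
  have hZclosed : ∀ x, IsClosed (Z x) := fun x =>
    (isClosed_discrete {a : A | a ∈ 𝔮}).preimage (continuous_id.smul continuous_const)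
  have hempty : (Set.univ : Set G) ∩ ⋂ x, Z x = ∅ := by
    ext g
    simp only [Set.mem_inter_iff, Set.mem_iInter, Set.mem_empty_iff_false, iff_false,
      Set.mem_univ, true_and, not_forall]
    obtain ⟨x, hx1, hx2⟩ := hc g
    exact ⟨⟨x, hx1⟩, hx2⟩
  obtain ⟨t, ht⟩ := isCompact_univ.elim_finite_subfamily_closed Z hZclosed hempty
  obtain ⟨g, hg⟩ := exists_smul_mem_finset 𝔮 𝔮' h (t.image fun x => x.1)
    (by rintro x hx; simp only [Finset.mem_image] at hx; obtain ⟨y, _, rfl⟩ := hx; exact y.2)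
  have : g ∈ (Set.univ : Set G) ∩ ⋂ x ∈ t, Z x := by
    refine ⟨trivial, ?_⟩
    simp only [Set.mem_iInter]
    intro x hx
    exact hg x.1 (Finset.mem_image_of_mem _ hx)
  rw [ht] at this
  exact this

/-- If `k` maps the prime `𝔮` into itself, so does `k⁻¹` (finite orbits). -/
lemma inv_smul_mem (𝔮 : Ideal A) (k : G) (hk : ∀ x ∈ 𝔮, k • x ∈ 𝔮) :
    ∀ x ∈ 𝔮, k⁻¹ • x ∈ 𝔮 := by
  have hpow : ∀ (n : ℕ) (x : A), x ∈ 𝔮 → k ^ n • x ∈ 𝔮 := by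
    intro n
    induction n with
    | zero => intro x hx; simpa using hx
    | succ m ih =>
      intro x hx
      have := hk _ (ih x hx)
      rwa [smul_smul, ← pow_succ'] at this
  intro x hx
  -- find d ≥ 1 with k ^ d • x = x using finiteness of the orbit
  have hfin : Finite (MulAction.orbit G x) := (orbit_finite' (G := G) x).to_subtype
  obtain ⟨m, n, hne, hmn⟩ := Finite.exists_ne_map_eq_of_infinite
    (fun n : ℕ => (⟨k ^ n • x, ⟨k ^ n, rfl⟩⟩ : MulAction.orbit G x))
  have hmn' : k ^ m • x = k ^ n • x := congrArg Subtype.val hmn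
  have key : ∀ p q : ℕ, p < q → k ^ p • x = k ^ q • x → ∃ d : ℕ, k ^ (d + 1) • x = x := by
    intro p q hpq heq
    refine ⟨q - p - 1, ?_⟩
    have h1 : k ^ p • k ^ (q - p) • x = k ^ p • x := by
      rw [smul_smul, ← pow_add, Nat.add_sub_cancel' hpq.le]
      exact heq.symm
    have h2 : k ^ (q - p) • x = x := smul_left_cancel _ h1
    have h3 : q - p - 1 + 1 = q - p := by omega
    rw [h3]
    exact h2
  obtain ⟨d, hd⟩ : ∃ d : ℕ, k ^ (d + 1) • x = x := by
    rcases hne.lt_or_gt with hlt | hlt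
    · exact key m n hlt hmn'
    · exact key n m hlt hmn'.symm
  have hx' : (k * k ^ d) • x = x := by rwa [pow_succ'] at hd
  have : k⁻¹ • x = k ^ d • x := by
    conv_lhs => rw [← hx']
    rw [mul_smul, inv_smul_smul]
  rw [this]
  exact hpow d x hx
end aux

/-- Let `G` be a compact topological group acting continuously by ring automorphisms on a
commutative ring `A` with the discrete topology. Then `G` acts transitively on the set of
prime ideals of `A` lying over a given prime `𝔭` of the fixed subring `A^G`: if `𝔮, 𝔮'` are
primes of `A` whose intersections with `A^G` coincide, then `g • 𝔮' = 𝔮` for some `g ∈ G`. -/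
theorem stmt_1 {G A : Type*} [Group G] [TopologicalSpace G] [IsTopologicalGroup G]
    [CompactSpace G] [CommRing A] [TopologicalSpace A] [DiscreteTopology A]
    [MulSemiringAction G A] [ContinuousSMul G A]
    (𝔮 𝔮' : Ideal A) [𝔮.IsPrime] [𝔮'.IsPrime]
    (h : ∀ a : A, (∀ g : G, g • a = a) → (a ∈ 𝔮 ↔ a ∈ 𝔮')) :
    ∃ g : G, ∀ a : A, a ∈ 𝔮' ↔ g • a ∈ 𝔮 := by
  obtain ⟨g, hg⟩ := exists_smul_le 𝔮 𝔮' h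
  obtain ⟨g', hg'⟩ := exists_smul_le 𝔮' 𝔮 (fun a ha => (h a ha).symm)
  have hk' : ∀ x ∈ 𝔮', (g' * g) • x ∈ 𝔮' := fun x hx => by
    rw [mul_smul]; exact hg' _ (hg x hx)
  refine ⟨g, fun a => ⟨fun ha => hg a ha, fun ha => ?_⟩⟩
  have h1 : (g' * g) • a ∈ 𝔮' := by rw [mul_smul]; exact hg' _ ha
  have h2 := inv_smul_mem 𝔮' (g' * g) hk' _ h1
  rwa [inv_smul_smul] at h2
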